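/- Let K be a field with |K| ≥ 3, n ≥ 2, and let Z be a linear subspace of M(n×n,K) such that every element of E_{1,2} + Z is nilpotent of rank 1. Then for every Y ∈ Z, either (Y has all rows 2,…,n zero and Y_{1,1} = 0) or (Y has all columns except column 2 zero and Y_{2,2} = 0). -/

import Mathlib

lemma stmt16_minor {n : ℕ} {K : Type*} [Field K] (A : Matrix (Fin n) (Fin n) K)
    (h : A.rank = 1) (i k j l : Fin n) : A i j * A k l = A i l * A k j := by
  have hr : Module.finrank K (LinearMap.range A.mulVecLin) = 1 := h
  obtain ⟨v, -, hv⟩ := finrank_eq_one_iff'.mp hr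
  have hcol : ∀ j : Fin n, ∃ c : K, ∀ i, A i j = c * (v : Fin n → K) i := by
    intro j
    have hmem : (fun i => A i j) ∈ LinearMap.range A.mulVecLin := by
      refine ⟨Pi.single j 1, ?_⟩
      ext i
      simp [Matrix.mulVecLin_apply, Matrix.mulVec, dotProduct, Pi.single_apply]
    obtain ⟨c, hc⟩ := hv ⟨_, hmem⟩
    refine ⟨c, fun i => ?_⟩
    have := congrFun (congrArg Subtype.val hc) i
    simpa using this.symm
  obtain ⟨cj, hcj⟩ := hcol j
  obtain ⟨cl, hcl⟩ := hcol l
  rw [hcj, hcl, hcj, hcl]; ring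

/-- If every element of `E_{1,2} + Z` is nilpotent of rank `1` over a field with at least
`3` elements, then each `Y ∈ Z` either has rows `2,…,n` zero and `Y_{1,1} = 0`, or has all
columns but the second zero and `Y_{2,2} = 0`. -/
theorem stmt16 (n : ℕ) (hn : 2 ≤ n) (K : Type*) [Field K]
    (hK : (3 : Cardinal) ≤ Cardinal.mk K)
    (Z : Submodule K (Matrix (Fin n) (Fin n) K))
    (hS : ∀ A ∈ Z,
      IsNilpotent (Matrix.single (⟨0, by omega⟩ : Fin n) (⟨1, by omega⟩ : Fin n)
        (1 : K) + A) ∧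
      (Matrix.single (⟨0, by omega⟩ : Fin n) (⟨1, by omega⟩ : Fin n) (1 : K)
        + A).rank = 1) :
    ∀ Y ∈ Z,
      ((∀ i : Fin n, 1 ≤ (i : ℕ) → ∀ j : Fin n, Y i j = 0) ∧
        Y ⟨0, by omega⟩ ⟨0, by omega⟩ = 0) ∨
      ((∀ j : Fin n, (j : ℕ) ≠ 1 → ∀ i : Fin n, Y i j = 0) ∧
        Y ⟨1, by omega⟩ ⟨1, by omega⟩ = 0) := by
  intro Y hY
  set z0 : Fin n := ⟨0, by omega⟩ with hz0
  set z1 : Fin n := ⟨1, by omega⟩ with hz1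
  have hz01 : z0 ≠ z1 := by simp [hz0, hz1, Fin.ext_iff]
  set E : Matrix (Fin n) (Fin n) K := Matrix.single z0 z1 (1 : K) with hE
  -- a scalar t with t ≠ 0 and t ≠ 1
  obtain ⟨t, ht0, ht1⟩ : ∃ t : K, t ≠ 0 ∧ t ≠ 1 := by
    obtain ⟨z, hz0', hz1'⟩ := Cardinal.three_le hK (0 : K) (1 : K)
    exact ⟨z, hz0', hz1'⟩
  -- entry values of E
  have hE01 : E z0 z1 = 1 := by simp [hE]
  have hErow : ∀ k : Fin n, k ≠ z0 → ∀ l : Fin n, E k l = 0 := by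
    intro k hk l
    simp [hE, Matrix.single, hk.symm]
  have hEcol : ∀ l : Fin n, l ≠ z1 → ∀ k : Fin n, E k l = 0 := by
    intro l hl k
    simp [hE, Matrix.single, hl.symm]
  -- key: entries outside row z0 and column z1 vanish
  have hb : ∀ k : Fin n, k ≠ z0 → ∀ l : Fin n, l ≠ z1 → Y k l = 0 := by
    intro k hk l hl
    have h1 := stmt16_minor _ (hS Y hY).2 z0 k z1 l
    have h2 := stmt16_minor _ (hS (t • Y) (Z.smul_mem t hY)).2 z0 k z1 l
    simp only [Matrix.add_apply, Matrix.smul_apply, smul_eq_mul,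
      hE01, hErow k hk, hEcol l hl, zero_add, add_zero] at h1 h2
    -- h1 : (1 + Y z0 z1) * Y k l = Y z0 l * Y k 1
    -- h2 : (1 + t * Y z0 z1) * (t * Y k l) = (t * Y z0 l) * (t * Y k z1)
    have key : t * (1 - t) * Y k l = 0 := by
      linear_combination h2 - t ^ 2 * h1
    have htt : t * (1 - t) ≠ 0 := mul_ne_zero ht0 (sub_ne_zero.mpr (Ne.symm ht1))
    exact (mul_eq_zero.mp key).resolve_left htt
  -- products of row-0 and column-1 entries vanish
  have hc : ∀ k : Fin n, k ≠ z0 → ∀ l : Fin n, l ≠ z1 → Y z0 l * Y k z1 = 0 := by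
    intro k hk l hl
    have h1 := stmt16_minor _ (hS Y hY).2 z0 k z1 l
    simp only [Matrix.add_apply, hE01, hErow k hk, hEcol l hl, zero_add, add_zero,
      hb k hk l hl, mul_zero] at h1
    exact h1.symm
  -- trace: Y z0 z0 + Y z1 z1 = 0
  have htr : Y z0 z0 + Y z1 z1 = 0 := by
    have hnil := (hS Y hY).1
    have h0 : Matrix.trace (E + Y) = 0 :=
      IsNilpotent.eq_zero (Matrix.isNilpotent_trace_of_isNilpotent hnil)
    rw [Matrix.trace_add, Matrix.trace_single_eq_of_ne _ _ _ hz01,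
      zero_add] at h0
    have hsub : ({z0, z1} : Finset (Fin n)) ⊆ Finset.univ := Finset.subset_univ _
    have hsum : ∑ k ∈ ({z0, z1} : Finset (Fin n)), Y k k = ∑ k, Y k k := by
      refine Finset.sum_subset hsub ?_
      intro x _ hx
      simp only [Finset.mem_insert, Finset.mem_singleton, not_or] at hx
      exact hb x hx.1 x hx.2
    rw [Finset.sum_pair hz01] at hsum
    rw [Matrix.trace] at h0
    simp only [Matrix.diag] at h0
    rw [← hsum] at h0
    exact h0
  by_cases hrow : ∀ l : Fin n, l ≠ z1 → Y z0 l = 0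
  · -- all columns but z1 vanish
    right
    have hcols : ∀ j : Fin n, (j : ℕ) ≠ 1 → ∀ i : Fin n, Y i j = 0 := by
      intro j hj i
      have hjz : j ≠ z1 := by simp [hz1, Fin.ext_iff, hj]
      rcases eq_or_ne i z0 with hi | hi
      · rw [hi]; exact hrow j hjz
      · exact hb i hi j hjz
    refine ⟨hcols, ?_⟩
    have h00 : Y z0 z0 = 0 := hrow z0 hz01
    have := htr
    rw [h00, zero_add] at this
    exact this
  · -- some entry of row z0 (outside col z1) is nonzero ⇒ column z1 vanishes below row z0
    left
    push_neg at hrow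
    obtain ⟨l0, hl0, hl0ne⟩ := hrow
    have hcol1 : ∀ k : Fin n, k ≠ z0 → Y k z1 = 0 := by
      intro k hk
      have := hc k hk l0 hl0
      exact (mul_eq_zero.mp this).resolve_left hl0ne
    have hrows : ∀ i : Fin n, 1 ≤ (i : ℕ) → ∀ j : Fin n, Y i j = 0 := by
      intro i hi j
      have hiz : i ≠ z0 := by simp [hz0, Fin.ext_iff]; omega
      rcases eq_or_ne j z1 with hj | hj
      · rw [hj]; exact hcol1 i hiz
      · exact hb i hiz j hj
    refine ⟨hrows, ?_⟩
    have h11 : Y z1 z1 = 0 := hcol1 z1 (Ne.symm hz01)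
    have := htr
    rw [h11, add_zero] at this
    exact this
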